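/- Let d ∈ (0,1], s ∈ (1/2,1) and N ≥ 1 + d. Set a₀ = (N/(2d))^{1/s} and for each positive integer n define Z_n = {a ≥ 1 : |a − nN| ≤ d·a^s}. Then for every positive integer n, Z_n ∩ Z_{n+1} = ∅ if and only if nN < a₀ − N/2, equivalently if and only if n + 1/2 < N^{(1/s)−1}/(2d)^{1/s}. -/

import Mathlib

lemma aux_rpow_sub_le {s b a : ℝ} (hs1 : s ≤ 1) (hb : 1 ≤ b) (hab : b ≤ a) :
    a ^ s - b ^ s ≤ a - b := by
  have hb0 : (0:ℝ) < b := by linarith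
  have ha0 : (0:ℝ) ≤ a := by linarith
  have h1 : a ^ s / b ^ s ≤ a / b := by
    rw [← Real.div_rpow ha0 hb0.le]
    calc (a/b)^s ≤ (a/b)^(1:ℝ) :=
          Real.rpow_le_rpow_of_exponent_le ((one_le_div hb0).2 hab) hs1
      _ = a/b := Real.rpow_one _
  have hy0 : (0:ℝ) < b ^ s := Real.rpow_pos_of_pos hb0 s
  have hyb : b ^ s ≤ b := by
    calc b ^ s ≤ b ^ (1:ℝ) := Real.rpow_le_rpow_of_exponent_le hb hs1
      _ = b := Real.rpow_one _
  have h2 : a ^ s * b ≤ a * b ^ s := by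
    rw [div_le_div_iff₀ hy0 hb0] at h1; linarith
  nlinarith [mul_nonneg (sub_nonneg.2 hyb) (sub_nonneg.2 hab)]

theorem sswpt_multiscale_resolution
    (d s N : ℝ) (hd : 0 < d) (hd1 : d ≤ 1) (hs : 1 / 2 < s) (hs1 : s < 1) (hN : 1 + d ≤ N) :
    ∀ n : ℕ, 0 < n →
      (Disjoint {a : ℝ | 1 ≤ a ∧ |a - (n : ℝ) * N| ≤ d * a ^ s}
          {a : ℝ | 1 ≤ a ∧ |a - ((n : ℝ) + 1) * N| ≤ d * a ^ s}
        ↔ (n : ℝ) * N < (N / (2 * d)) ^ (1 / s) - N / 2) ∧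
      ((n : ℝ) * N < (N / (2 * d)) ^ (1 / s) - N / 2
        ↔ (n : ℝ) + 1 / 2 < N ^ (1 / s - 1) / (2 * d) ^ (1 / s)) := by
  intro n hn
  have hN0 : (0:ℝ) < N := by linarith
  have hs0 : (0:ℝ) < s := by linarith
  have hd2 : (0:ℝ) < 2 * d := by linarith
  have hn1 : (1:ℝ) ≤ (n:ℝ) := by exact_mod_cast hn
  have hnN : N ≤ (n:ℝ) * N := le_mul_of_one_le_left hN0.le hn1
  have hNd : (1:ℝ) ≤ N / (2 * d) := by rw [le_div_iff₀ hd2]; linarith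
  have ha₀1 : (1:ℝ) ≤ (N / (2 * d)) ^ (1 / s) := Real.one_le_rpow hNd (by positivity)
  have ha₀s : ((N / (2 * d)) ^ (1 / s)) ^ s = N / (2 * d) := by
    rw [← Real.rpow_mul (by positivity), one_div, inv_mul_cancel₀ hs0.ne', Real.rpow_one]
  have hda₀ : d * ((N / (2 * d)) ^ (1 / s)) ^ s = N / 2 := by
    rw [ha₀s]; field_simp
  constructor
  · constructor
    · intro hdis
      by_contra hlt
      push_neg at hlt
      have ha1 : (1:ℝ) ≤ (n:ℝ) * N + N / 2 := by linarith
      have haa₀ : (N / (2 * d)) ^ (1 / s) ≤ (n:ℝ) * N + N / 2 := by linarith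
      have hdas : N / 2 ≤ d * ((n:ℝ) * N + N / 2) ^ s := by
        have hmono := Real.rpow_le_rpow (by positivity) haa₀ hs0.le
        calc N / 2 = d * ((N / (2 * d)) ^ (1 / s)) ^ s := hda₀.symm
          _ ≤ d * ((n:ℝ) * N + N / 2) ^ s := by nlinarith
      have hmem1 : ((n:ℝ) * N + N / 2) ∈
          {a : ℝ | 1 ≤ a ∧ |a - (n : ℝ) * N| ≤ d * a ^ s} := by
        refine ⟨ha1, ?_⟩
        rw [abs_le]
        constructor <;> linarith
      have hmem2 : ((n:ℝ) * N + N / 2) ∈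
          {a : ℝ | 1 ≤ a ∧ |a - ((n : ℝ) + 1) * N| ≤ d * a ^ s} := by
        refine ⟨ha1, ?_⟩
        rw [abs_le]
        constructor <;> nlinarith
      exact Set.disjoint_left.1 hdis hmem1 hmem2
    · intro hlt
      rw [Set.disjoint_left]
      rintro a ⟨ha1, hZ1⟩ ⟨_, hZ2⟩
      rw [abs_le] at hZ1 hZ2
      have ha0 : (0:ℝ) ≤ a := by linarith
      have hsa : N / (2 * d) ≤ a ^ s := by
        rw [div_le_iff₀ hd2]; nlinarith [hZ1.2, hZ2.1]
      have key : (a ^ s) ^ (1/s) = a := by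
        rw [← Real.rpow_mul ha0, mul_one_div, div_self hs0.ne', Real.rpow_one]
      have haa₀ : (N / (2 * d)) ^ (1 / s) ≤ a := by
        rw [← key]
        exact Real.rpow_le_rpow (by positivity) hsa (by positivity)
      have hmono : (N / (2 * d)) ^ (1 / s) - d * ((N / (2 * d)) ^ (1 / s)) ^ s
          ≤ a - d * a ^ s := by
        have h := aux_rpow_sub_le hs1.le ha₀1 haa₀
        nlinarith
      rw [hda₀] at hmono
      linarith [hZ1.2]
  · have hdiv : (N / (2 * d)) ^ (1 / s) = N ^ (1/s) / (2*d) ^ (1/s) :=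
      Real.div_rpow hN0.le hd2.le (1/s)
    have hpow : N ^ (1/s - 1) = N ^ (1/s) / N := by
      rw [Real.rpow_sub hN0, Real.rpow_one]
    rw [hdiv, hpow, div_div]
    have hB : (0:ℝ) < (2*d) ^ (1/s) := Real.rpow_pos_of_pos hd2 _
    have hNB : (0:ℝ) < N * (2*d) ^ (1/s) := by positivity
    constructor
    · intro h
      have h' : ((n:ℝ)*N + N/2) * (2*d)^(1/s) < N^(1/s) := by
        rw [← lt_div_iff₀ hB]; linarith
      rw [lt_div_iff₀ hNB]
      calc ((n:ℝ)+1/2) * (N*(2*d)^(1/s)) = ((n:ℝ)*N + N/2) * (2*d)^(1/s) := by ring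
        _ < N^(1/s) := h'
    · intro h
      rw [lt_div_iff₀ hNB] at h
      have h' : ((n:ℝ)*N + N/2) * (2*d)^(1/s) < N^(1/s) := by
        calc ((n:ℝ)*N + N/2) * (2*d)^(1/s) = ((n:ℝ)+1/2) * (N*(2*d)^(1/s)) := by ring
          _ < N^(1/s) := h
      rw [← lt_div_iff₀ hB] at h'
      linarith
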